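/- Let (X_1,Y_1), …, (X_n,Y_n) be i.i.d. pairs of finitely-valued random variables, and let F_x = f_x(X^n) and F_y = f_y(Y^n) for arbitrary functions f_x, f_y. Then H(F_x | F_y) ≥ I(X^n; F_x, F_y) − Σ_{i=1}^n I(X_i; F_y, Y^{i−1}), where Y^{i−1} = (Y_1, …, Y_{i−1}). -/

import Mathlib

open scoped BigOperators

/-- A probability mass function on a finite type, real-valued. -/
structure FinPMF (α : Type) [Fintype α] where
  p : α → ℝ
  nonneg : ∀ a, 0 ≤ p a
  sum_one : ∑ a, p a = 1

namespace FinPMF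

variable {Ω : Type} [Fintype Ω]

/-- The distribution (pushforward pmf) of a finitely-valued random variable. -/
def dist {α : Type} [Fintype α] [DecidableEq α] (μ : FinPMF Ω) (X : Ω → α) (a : α) : ℝ :=
  ∑ ω, if X ω = a then μ.p ω else 0

/-- Shannon entropy `H(X)` (natural logarithm). -/
noncomputable def H {α : Type} [Fintype α] [DecidableEq α] (μ : FinPMF Ω) (X : Ω → α) : ℝ :=
  -∑ a, dist μ X a * Real.log (dist μ X a)

/-- Mutual information `I(X;Y)`. -/
noncomputable def MI {α β : Type} [Fintype α] [DecidableEq α] [Fintype β] [DecidableEq β]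
    (μ : FinPMF Ω) (X : Ω → α) (Y : Ω → β) : ℝ :=
  H μ X + H μ Y - H μ (fun ω => (X ω, Y ω))

/-- Conditional entropy `H(X|Y)`. -/
noncomputable def condH {α β : Type} [Fintype α] [DecidableEq α] [Fintype β] [DecidableEq β]
    (μ : FinPMF Ω) (X : Ω → α) (Y : Ω → β) : ℝ :=
  H μ (fun ω => (X ω, Y ω)) - H μ Y

/-- Conditional mutual information `I(X;Y|Z)`. -/
noncomputable def condMI {α β γ : Type} [Fintype α] [DecidableEq α] [Fintype β] [DecidableEq β]
    [Fintype γ] [DecidableEq γ] (μ : FinPMF Ω) (X : Ω → α) (Y : Ω → β) (Z : Ω → γ) : ℝ :=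
  condH μ X Z + condH μ Y Z - condH μ (fun ω => (X ω, Y ω)) Z

open scoped Classical in
/-- Probability of an event. -/
noncomputable def prob (μ : FinPMF Ω) (S : Ω → Prop) : ℝ :=
  ∑ ω, if S ω then μ.p ω else 0

/-- Conditional independence: `A` and `C` are conditionally independent given `B`
(the Markov chain `A ↔ B ↔ C`). -/
def CondIndep {α β γ : Type} [Fintype α] [DecidableEq α] [Fintype β] [DecidableEq β]
    [Fintype γ] [DecidableEq γ] (μ : FinPMF Ω) (A : Ω → α) (B : Ω → β) (C : Ω → γ) : Prop :=
  ∀ a b c, dist μ (fun ω => (A ω, B ω, C ω)) (a, b, c) * dist μ B b =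
    dist μ (fun ω => (A ω, B ω)) (a, b) * dist μ (fun ω => (B ω, C ω)) (b, c)

/-- The i.i.d. product pmf on `Fin n → Ω`. -/
def iid (μ : FinPMF Ω) (n : ℕ) : FinPMF (Fin n → Ω) where
  p := fun ω => ∏ i, μ.p (ω i)
  nonneg := fun ω => Finset.prod_nonneg fun i _ => μ.nonneg _
  sum_one := by
    have h := Finset.prod_univ_sum (fun _ : Fin n => (Finset.univ : Finset Ω))
      (fun _ a => μ.p a)
    rw [Fintype.piFinset_univ] at h
    rw [← h]
    simp [μ.sum_one]

/-- The product of two pmfs. -/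
def prodPMF {α β : Type} [Fintype α] [Fintype β] (μ : FinPMF α) (ν : FinPMF β) :
    FinPMF (α × β) where
  p := fun ab => μ.p ab.1 * ν.p ab.2
  nonneg := fun ab => mul_nonneg (μ.nonneg _) (ν.nonneg _)
  sum_one := by
    rw [Fintype.sum_prod_type]
    simp_rw [← Finset.mul_sum, ν.sum_one, mul_one]
    exact μ.sum_one

/-- The uniform pmf on a nonempty finite type. -/
noncomputable def uniform (α : Type) [Fintype α] (h : Nonempty α) : FinPMF α where
  p := fun _ => (Fintype.card α : ℝ)⁻¹
  nonneg := fun _ => by positivity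
  sum_one := by
    have hc : (0:ℝ) < Fintype.card α := by
      exact_mod_cast Fintype.card_pos_iff.mpr h
    simp only [Finset.sum_const, Finset.card_univ, nsmul_eq_mul]
    field_simp

/-- The pushforward pmf of a random variable. -/
def push {α : Type} [Fintype α] [DecidableEq α] (μ : FinPMF Ω) (X : Ω → α) : FinPMF α where
  p := dist μ X
  nonneg := fun a => Finset.sum_nonneg fun ω _ => by
    split <;> simp [μ.nonneg]
  sum_one := by
    unfold dist
    rw [Finset.sum_comm]
    simp [μ.sum_one]

end FinPMF

namespace FinPMF
variable {Ω : Type} [Fintype Ω] {μ : FinPMF Ω}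

lemma dist_nonneg' {α : Type} [Fintype α] [DecidableEq α] (X : Ω → α) (a : α) :
    0 ≤ dist μ X a := (push μ X).nonneg a

lemma sum_dist {α : Type} [Fintype α] [DecidableEq α] (X : Ω → α) :
    ∑ a, dist μ X a = 1 := (push μ X).sum_one

lemma dist_map {α β : Type} [Fintype α] [DecidableEq α] [Fintype β] [DecidableEq β]
    (X : Ω → α) (g : α → β) (b : β) :
    dist μ (fun ω => g (X ω)) b = ∑ a, if g a = b then dist μ X a else 0 := by
  unfold dist
  have : ∀ a : α, (if g a = b then ∑ ω, if X ω = a then μ.p ω else 0 else 0)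
      = ∑ ω, if X ω = a then (if g a = b then μ.p ω else 0) else 0 := by
    intro a; split <;> simp
  simp_rw [this]
  rw [Finset.sum_comm]
  refine Finset.sum_congr rfl fun ω _ => ?_
  rw [Finset.sum_eq_single (X ω)]
  · simp
  · intro a _ ha
    simp [Ne.symm ha]
  · simp

lemma H_congr {α : Type} [Fintype α] [DecidableEq α] {X Y : Ω → α} (h : ∀ ω, X ω = Y ω) :
    H μ X = H μ Y := by
  have : X = Y := funext h
  rw [this]

lemma dist_push {α β : Type} [Fintype α] [DecidableEq α] [Fintype β] [DecidableEq β]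
    (Z : Ω → α) (g : α → β) (b : β) :
    dist (push μ Z) g b = dist μ (fun ω => g (Z ω)) b := by
  rw [dist_map (μ := μ) Z g b]
  rfl

lemma H_push {α β : Type} [Fintype α] [DecidableEq α] [Fintype β] [DecidableEq β]
    (Z : Ω → α) (g : α → β) :
    H (push μ Z) g = H μ (fun ω => g (Z ω)) := by
  unfold H
  simp_rw [dist_push]

end FinPMF

namespace FinPMF
variable {Ω : Type} [Fintype Ω] {μ : FinPMF Ω}

lemma dist_comp_inj {α β : Type} [Fintype α] [DecidableEq α] [Fintype β] [DecidableEq β]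
    (X : Ω → α) {e : α → β} (he : Function.Injective e) (a : α) :
    dist μ (fun ω => e (X ω)) (e a) = dist μ X a := by
  rw [dist_map]
  rw [Finset.sum_eq_single a]
  · simp
  · intro a' _ ha'
    rw [if_neg (fun h => ha' (he h))]
  · simp

lemma H_comp_inj {α β : Type} [Fintype α] [DecidableEq α] [Fintype β] [DecidableEq β]
    (X : Ω → α) {e : α → β} (he : Function.Injective e) :
    H μ (fun ω => e (X ω)) = H μ X := by
  unfold H
  congr 1
  rw [← Finset.sum_subset (Finset.subset_univ (Finset.univ.image e))]
  · rw [Finset.sum_image (fun a _ a' _ h => he h)]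
    exact Finset.sum_congr rfl fun a _ => by rw [dist_comp_inj X he]
  · intro b _ hb
    have : dist μ (fun ω => e (X ω)) b = 0 := by
      rw [dist_map]
      refine Finset.sum_eq_zero fun a _ => ?_
      have : e a ≠ b := fun h => hb (by simp [← h])
      simp [this]
    simp [this]

lemma H_comp_le {α β : Type} [Fintype α] [DecidableEq α] [Fintype β] [DecidableEq β]
    (X : Ω → α) (g : α → β) :
    H μ (fun ω => g (X ω)) ≤ H μ X := by
  unfold H
  rw [neg_le_neg_iff]
  have key : ∀ b, dist μ (fun ω => g (X ω)) b * Real.log (dist μ (fun ω => g (X ω)) b)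
      = ∑ a, (if g a = b then dist μ X a else 0) * Real.log (dist μ (fun ω => g (X ω)) b) := by
    intro b
    rw [← Finset.sum_mul, ← dist_map]
  simp_rw [key]
  rw [Finset.sum_comm]
  refine Finset.sum_le_sum fun a _ => ?_
  rw [Finset.sum_eq_single (g a)]
  · simp only [if_pos rfl]
    rcases eq_or_lt_of_le (dist_nonneg' (μ := μ) X a) with h | h
    · simp [← h]
    · refine mul_le_mul_of_nonneg_left (Real.log_le_log h ?_) (le_of_lt h)
      rw [dist_map (μ := μ) X g (g a)]
      have hnn : ∀ a' : α, a' ∈ Finset.univ → 0 ≤ if g a' = g a then dist μ X a' else 0 := by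
        intro a' _
        split
        · exact dist_nonneg' X _
        · exact le_refl 0
      refine Finset.single_le_sum (f := fun a' => if g a' = g a then dist μ X a' else 0)
        hnn (Finset.mem_univ a) |>.trans_eq' ?_
      simp
  · intro b _ hb
    simp [Ne.symm hb]
  · simp

lemma H_unique {α : Type} [Fintype α] [DecidableEq α] [Unique α] (X : Ω → α) :
    H μ X = 0 := by
  unfold H
  rw [Fintype.sum_unique]
  have : dist μ X default = 1 := by
    unfold dist
    have hX : ∀ ω, X ω = default := fun ω => Subsingleton.elim _ _
    simp only [hX, if_pos rfl]
    exact μ.sum_one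
  simp [this]

lemma H_pair_of_indep {α β : Type} [Fintype α] [DecidableEq α] [Fintype β] [DecidableEq β]
    {U : Ω → α} {V : Ω → β}
    (hInd : ∀ u v, dist μ (fun ω => (U ω, V ω)) (u, v) = dist μ U u * dist μ V v) :
    H μ (fun ω => (U ω, V ω)) = H μ U + H μ V := by
  unfold H
  rw [Fintype.sum_prod_type]
  simp_rw [hInd]
  have key : ∀ (u : α) (v : β), dist μ U u * dist μ V v * Real.log (dist μ U u * dist μ V v)
      = dist μ V v * (dist μ U u * Real.log (dist μ U u))
        + dist μ U u * (dist μ V v * Real.log (dist μ V v)) := by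
    intro u v
    rcases eq_or_lt_of_le (dist_nonneg' (μ := μ) U u) with h | h
    · simp [← h]
    rcases eq_or_lt_of_le (dist_nonneg' (μ := μ) V v) with h' | h'
    · simp [← h']
    rw [Real.log_mul (ne_of_gt h) (ne_of_gt h')]
    ring
  simp_rw [key, Finset.sum_add_distrib, ← Finset.mul_sum, ← Finset.sum_mul]
  rw [sum_dist, sum_dist]
  ring_nf
end FinPMF

namespace FinPMF
variable {Ω : Type} [Fintype Ω] {μ : FinPMF Ω}
variable {α β γ : Type} [Fintype α] [DecidableEq α] [Fintype β] [DecidableEq β]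
  [Fintype γ] [DecidableEq γ]

lemma dist_pair_fst (U : Ω → α) (V : Ω → β) (u : α) :
    dist μ U u = ∑ v, dist μ (fun ω => (U ω, V ω)) (u, v) := by
  unfold dist
  rw [Finset.sum_comm]
  refine Finset.sum_congr rfl fun ω _ => ?_
  rw [Finset.sum_eq_single (V ω)]
  · by_cases h : U ω = u <;> simp [Prod.ext_iff, h]
  · intro v _ hv
    simp [Prod.ext_iff, Ne.symm hv]
  · simp

lemma dist_pair_snd (U : Ω → α) (V : Ω → β) (v : β) :
    dist μ V v = ∑ u, dist μ (fun ω => (U ω, V ω)) (u, v) := by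
  unfold dist
  rw [Finset.sum_comm]
  refine Finset.sum_congr rfl fun ω _ => ?_
  rw [Finset.sum_eq_single (U ω)]
  · by_cases h : V ω = v <;> simp [Prod.ext_iff, h]
  · intro u _ hu
    simp [Prod.ext_iff, Ne.symm hu]
  · simp

/-- marginalize out the middle coordinate of `((A,B),C)`. -/
lemma dist_middle (A : Ω → α) (B : Ω → β) (C : Ω → γ) (a : α) (c : γ) :
    dist μ (fun ω => (A ω, C ω)) (a, c)
      = ∑ b, dist μ (fun ω => ((A ω, B ω), C ω)) ((a, b), c) := by
  unfold dist
  rw [Finset.sum_comm]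
  refine Finset.sum_congr rfl fun ω _ => ?_
  rw [Finset.sum_eq_single (B ω)]
  · by_cases h1 : A ω = a <;> by_cases h2 : C ω = c <;> simp [Prod.ext_iff, h1, h2]
  · intro b _ hb
    simp [Prod.ext_iff, Ne.symm hb]
  · simp

/-- marginalize out the first coordinate of `((A,B),C)`. -/
lemma dist_first (A : Ω → α) (B : Ω → β) (C : Ω → γ) (b : β) (c : γ) :
    dist μ (fun ω => (B ω, C ω)) (b, c)
      = ∑ a, dist μ (fun ω => ((A ω, B ω), C ω)) ((a, b), c) := by
  unfold dist
  rw [Finset.sum_comm]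
  refine Finset.sum_congr rfl fun ω _ => ?_
  rw [Finset.sum_eq_single (A ω)]
  · by_cases h1 : B ω = b <;> by_cases h2 : C ω = c <;> simp [Prod.ext_iff, h1, h2]
  · intro a _ ha
    simp [Prod.ext_iff, Ne.symm ha]
  · simp

/-- marginalize out the last coordinate of `(A,B,C)` (nested `(a,(b,c))`). -/
lemma dist_last (A : Ω → α) (B : Ω → β) (C : Ω → γ) (a : α) (b : β) :
    dist μ (fun ω => (A ω, B ω)) (a, b)
      = ∑ c, dist μ (fun ω => (A ω, B ω, C ω)) (a, b, c) := by
  unfold dist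
  rw [Finset.sum_comm]
  refine Finset.sum_congr rfl fun ω _ => ?_
  rw [Finset.sum_eq_single (C ω)]
  · by_cases h1 : A ω = a <;> by_cases h2 : B ω = b <;> simp [Prod.ext_iff, h1, h2]
  · intro c _ hc
    simp [Prod.ext_iff, Ne.symm hc]
  · simp

end FinPMF

namespace FinPMF
variable {Ω : Type} [Fintype Ω] {μ : FinPMF Ω}
variable {α β γ : Type} [Fintype α] [DecidableEq α] [Fintype β] [DecidableEq β]
  [Fintype γ] [DecidableEq γ]

lemma gibbs (A : Ω → α) (B : Ω → β) (C : Ω → γ) :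
    H μ C + H μ (fun ω => ((A ω, B ω), C ω))
      ≤ H μ (fun ω => (A ω, C ω)) + H μ (fun ω => (B ω, C ω)) := by
  classical
  set P : α → β → γ → ℝ := fun a b c => dist μ (fun ω => ((A ω, B ω), C ω)) ((a, b), c) with hP
  set pac : α → γ → ℝ := fun a c => dist μ (fun ω => (A ω, C ω)) (a, c) with hpac
  set pbc : β → γ → ℝ := fun b c => dist μ (fun ω => (B ω, C ω)) (b, c) with hpbc
  set pc : γ → ℝ := fun c => dist μ C c with hpc
  have hPnn : ∀ a b c, 0 ≤ P a b c := fun a b c => dist_nonneg' _ _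
  have hmac : ∀ a c, pac a c = ∑ b, P a b c := fun a c => dist_middle A B C a c
  have hmbc : ∀ b c, pbc b c = ∑ a, P a b c := fun b c => dist_first A B C b c
  have hmc : ∀ c, pc c = ∑ a, ∑ b, P a b c := by
    intro c
    rw [show pc c = ∑ u : α × β, dist μ (fun ω => ((A ω, B ω), C ω)) (u, c) from
      dist_pair_snd _ C c, Fintype.sum_prod_type]
  have hmc' : ∀ c, pc c = ∑ b, pbc b c := by
    intro c; rw [hmc c, Finset.sum_comm]
    exact Finset.sum_congr rfl fun b _ => (hmbc b c).symm
  have hmc'' : ∀ c, pc c = ∑ a, pac a c := by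
    intro c; rw [hmc c]
    exact Finset.sum_congr rfl fun a _ => (hmac a c).symm
  have hPac : ∀ a b c, P a b c ≤ pac a c := by
    intro a b c; rw [hmac]
    exact Finset.single_le_sum (fun b' _ => hPnn a b' c) (Finset.mem_univ b)
  have hPbc : ∀ a b c, P a b c ≤ pbc b c := by
    intro a b c; rw [hmbc]
    exact Finset.single_le_sum (fun a' _ => hPnn a' b c) (Finset.mem_univ a)
  have hbcc : ∀ b c, pbc b c ≤ pc c := by
    intro b c; rw [hmc']
    refine Finset.single_le_sum (f := fun b' => pbc b' c) (fun b' _ => ?_) (Finset.mem_univ b)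
    show 0 ≤ pbc b' c
    rw [hmbc]; exact Finset.sum_nonneg fun a _ => hPnn a b' c
  -- express the four entropies as triple sums
  have h4 : H μ (fun ω => ((A ω, B ω), C ω))
      = -∑ a, ∑ b, ∑ c, P a b c * Real.log (P a b c) := by
    unfold H
    rw [Fintype.sum_prod_type, Fintype.sum_prod_type]
  have h3 : H μ C = -∑ a, ∑ b, ∑ c, P a b c * Real.log (pc c) := by
    unfold H
    congr 1
    have : ∀ c, pc c * Real.log (pc c) = ∑ a, ∑ b, P a b c * Real.log (pc c) := by
      intro c
      rw [hmc c, Finset.sum_mul]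
      exact Finset.sum_congr rfl fun a _ => Finset.sum_mul _ _ _
    rw [show (∑ c, dist μ C c * Real.log (dist μ C c)) = ∑ c, pc c * Real.log (pc c) from rfl]
    simp_rw [this]
    rw [Finset.sum_comm]
    exact Finset.sum_congr rfl fun a _ => Finset.sum_comm
  have h1 : H μ (fun ω => (A ω, C ω)) = -∑ a, ∑ b, ∑ c, P a b c * Real.log (pac a c) := by
    unfold H
    rw [Fintype.sum_prod_type]
    congr 1
    refine Finset.sum_congr rfl fun a _ => ?_
    have : ∀ c, pac a c * Real.log (pac a c) = ∑ b, P a b c * Real.log (pac a c) := by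
      intro c
      rw [hmac a c, Finset.sum_mul]
    calc (∑ c, dist μ (fun ω => (A ω, C ω)) (a, c)
            * Real.log (dist μ (fun ω => (A ω, C ω)) (a, c)))
        = ∑ c, ∑ b, P a b c * Real.log (pac a c) := Finset.sum_congr rfl fun c _ => this c
      _ = ∑ b, ∑ c, P a b c * Real.log (pac a c) := Finset.sum_comm
  have h2 : H μ (fun ω => (B ω, C ω)) = -∑ a, ∑ b, ∑ c, P a b c * Real.log (pbc b c) := by
    unfold H
    rw [Fintype.sum_prod_type]
    congr 1
    have this2 : ∀ b c, pbc b c * Real.log (pbc b c) = ∑ a, P a b c * Real.log (pbc b c) := by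
      intro b c
      nth_rewrite 1 [hmbc b c]
      rw [Finset.sum_mul]
    calc (∑ b, ∑ c, dist μ (fun ω => (B ω, C ω)) (b, c)
            * Real.log (dist μ (fun ω => (B ω, C ω)) (b, c)))
        = ∑ b, ∑ c, ∑ a, P a b c * Real.log (pbc b c) :=
          Finset.sum_congr rfl fun b _ => Finset.sum_congr rfl fun c _ => this2 b c
      _ = ∑ b, ∑ a, ∑ c, P a b c * Real.log (pbc b c) :=
          Finset.sum_congr rfl fun b _ => Finset.sum_comm
      _ = ∑ a, ∑ b, ∑ c, P a b c * Real.log (pbc b c) := Finset.sum_comm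
  rw [h1, h2, h3, h4]
  rw [← sub_nonneg]
  have hcomb : (-∑ a, ∑ b, ∑ c, P a b c * Real.log (pac a c))
      + (-∑ a, ∑ b, ∑ c, P a b c * Real.log (pbc b c))
      - ((-∑ a, ∑ b, ∑ c, P a b c * Real.log (pc c))
      + (-∑ a, ∑ b, ∑ c, P a b c * Real.log (P a b c)))
      = ∑ a, ∑ b, ∑ c, (P a b c * Real.log (P a b c) + P a b c * Real.log (pc c)
          - P a b c * Real.log (pac a c) - P a b c * Real.log (pbc b c)) := by
    simp only [Finset.sum_add_distrib, Finset.sum_sub_distrib]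
    ring
  rw [hcomb]
  -- termwise bound by  P - s
  have key : ∀ a b c, P a b c * Real.log (P a b c) + P a b c * Real.log (pc c)
      - P a b c * Real.log (pac a c) - P a b c * Real.log (pbc b c)
      ≥ P a b c - (if pc c = 0 then 0 else pac a c * pbc b c / pc c) := by
    intro a b c
    rcases eq_or_lt_of_le (hPnn a b c) with hP0 | hP0
    · have hs : 0 ≤ (if pc c = 0 then 0 else pac a c * pbc b c / pc c) := by
        split
        · exact le_refl 0
        · rename_i hpc
          have h1 : 0 ≤ pac a c := dist_nonneg' _ _
          have h2 : 0 ≤ pbc b c := dist_nonneg' _ _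
          have h3 : 0 < pc c := lt_of_le_of_ne (dist_nonneg' _ _) (Ne.symm hpc)
          positivity
      rw [← hP0]
      simp only [zero_mul]
      linarith
    · have hpacpos : 0 < pac a c := lt_of_lt_of_le hP0 (hPac a b c)
      have hpbcpos : 0 < pbc b c := lt_of_lt_of_le hP0 (hPbc a b c)
      have hpcpos : 0 < pc c := lt_of_lt_of_le hpbcpos (hbcc b c)
      rw [if_neg (ne_of_gt hpcpos)]
      set y : ℝ := pac a c * pbc b c / (P a b c * pc c) with hy
      have hypos : 0 < y := by positivity
      have hlog : Real.log y ≤ y - 1 := Real.log_le_sub_one_of_pos hypos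
      have hylog : Real.log y = Real.log (pac a c) + Real.log (pbc b c)
          - Real.log (P a b c) - Real.log (pc c) := by
        rw [hy, Real.log_div (by positivity) (by positivity),
          Real.log_mul (ne_of_gt hpacpos) (ne_of_gt hpbcpos),
          Real.log_mul (ne_of_gt hP0) (ne_of_gt hpcpos)]
        ring
      have hPy : P a b c * y = pac a c * pbc b c / pc c := by
        rw [hy]; field_simp
      nlinarith [mul_le_mul_of_nonneg_left hlog (le_of_lt hP0)]
  refine le_trans ?_ (Finset.sum_le_sum fun a _ => Finset.sum_le_sum fun b _ =>
    Finset.sum_le_sum fun c _ => key a b c)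
  -- the sum of the lower bounds is 0
  have hsum1 : ∑ a, ∑ b, ∑ c, P a b c = 1 := by
    have : ∀ a b, ∑ c, P a b c = ∑ c, P a b c := fun _ _ => rfl
    calc ∑ a, ∑ b, ∑ c, P a b c = ∑ a, ∑ c, ∑ b, P a b c :=
          Finset.sum_congr rfl fun a _ => Finset.sum_comm
      _ = ∑ c, ∑ a, ∑ b, P a b c := Finset.sum_comm
      _ = ∑ c, pc c := Finset.sum_congr rfl fun c _ => (hmc c).symm
      _ = 1 := sum_dist C
  have hsum2 : ∑ a, ∑ b, ∑ c, (if pc c = 0 then 0 else pac a c * pbc b c / pc c) = 1 := by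
    calc ∑ a, ∑ b, ∑ c, (if pc c = 0 then 0 else pac a c * pbc b c / pc c)
        = ∑ a, ∑ c, ∑ b, (if pc c = 0 then 0 else pac a c * pbc b c / pc c) :=
          Finset.sum_congr rfl fun a _ => Finset.sum_comm
      _ = ∑ c, ∑ a, ∑ b, (if pc c = 0 then 0 else pac a c * pbc b c / pc c) := Finset.sum_comm
      _ = ∑ c, pc c := by
          refine Finset.sum_congr rfl fun c _ => ?_
          split
          · rename_i h; simp [h]
          · rename_i hpc0
            calc ∑ a, ∑ b, pac a c * pbc b c / pc c
                = ∑ a, (∑ b, pac a c * pbc b c) / pc c :=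
                  Finset.sum_congr rfl fun a _ => (Finset.sum_div _ _ _).symm
              _ = (∑ a, ∑ b, pac a c * pbc b c) / pc c := (Finset.sum_div _ _ _).symm
              _ = ((∑ a, pac a c) * (∑ b, pbc b c)) / pc c := by rw [Finset.sum_mul_sum]
              _ = (pc c * pc c) / pc c := by rw [← hmc'' c, ← hmc' c]
              _ = pc c := by rw [mul_div_assoc, div_self hpc0, mul_one]
      _ = 1 := sum_dist C
  have : ∑ a, ∑ b, ∑ c, (P a b c - (if pc c = 0 then 0 else pac a c * pbc b c / pc c))
      = 0 := by
    simp only [Finset.sum_sub_distrib]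
    rw [hsum1, hsum2]; ring
  exact le_of_eq this.symm

end FinPMF

namespace FinPMF
variable {Ω : Type} [Fintype Ω] {μ : FinPMF Ω}
variable {α β γ : Type} [Fintype α] [DecidableEq α] [Fintype β] [DecidableEq β]
  [Fintype γ] [DecidableEq γ]

lemma H_triple_of_condIndep {A : Ω → α} {B : Ω → β} {C : Ω → γ}
    (h : CondIndep μ A B C) :
    H μ (fun ω => (A ω, B ω, C ω)) + H μ B
      = H μ (fun ω => (A ω, B ω)) + H μ (fun ω => (B ω, C ω)) := by
  classical
  set P : α → β → γ → ℝ := fun a b c => dist μ (fun ω => (A ω, B ω, C ω)) (a, b, c) with hPdef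
  set pab : α → β → ℝ := fun a b => dist μ (fun ω => (A ω, B ω)) (a, b) with hpabdef
  set pbc : β → γ → ℝ := fun b c => dist μ (fun ω => (B ω, C ω)) (b, c) with hpbcdef
  set pb : β → ℝ := fun b => dist μ B b with hpbdef
  have hPnn : ∀ a b c, 0 ≤ P a b c := fun a b c => dist_nonneg' _ _
  have hmab : ∀ a b, pab a b = ∑ c, P a b c := fun a b => dist_last A B C a b
  have hmbc : ∀ b c, pbc b c = ∑ a, P a b c := fun b c =>
    dist_pair_snd A (fun ω => (B ω, C ω)) (b, c)
  have hmb : ∀ b, pb b = ∑ c, pbc b c := fun b => dist_pair_fst B C b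
  have hmb' : ∀ b, pb b = ∑ a, ∑ c, P a b c := by
    intro b
    rw [hmb b]
    calc ∑ c, pbc b c = ∑ c, ∑ a, P a b c := Finset.sum_congr rfl fun c _ => hmbc b c
      _ = ∑ a, ∑ c, P a b c := Finset.sum_comm
  have hpbcnn : ∀ b c, 0 ≤ pbc b c := fun b c => dist_nonneg' _ _
  have hpabnn : ∀ a b, 0 ≤ pab a b := fun a b => dist_nonneg' _ _
  have key : ∀ a b c, P a b c * Real.log (P a b c)
      = P a b c * Real.log (pab a b) + P a b c * Real.log (pbc b c)
        - P a b c * Real.log (pb b) := by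
    intro a b c
    rcases eq_or_lt_of_le (hPnn a b c) with hP0 | hP0
    · rw [← hP0]; ring
    · have hPbc : P a b c ≤ pbc b c := by
        rw [hmbc]
        exact Finset.single_le_sum (fun a' _ => hPnn a' b c) (Finset.mem_univ a)
      have hbcb : pbc b c ≤ pb b := by
        rw [hmb]
        exact Finset.single_le_sum (f := fun c' => pbc b c') (fun c' _ => hpbcnn b c')
          (Finset.mem_univ c)
      have hpbpos : 0 < pb b := lt_of_lt_of_le (lt_of_lt_of_le hP0 hPbc) hbcb
      have hprod : P a b c * pb b = pab a b * pbc b c := h a b c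
      have hprodpos : 0 < pab a b * pbc b c := hprod ▸ mul_pos hP0 hpbpos
      have hpabpos : 0 < pab a b := by
        rcases eq_or_lt_of_le (hpabnn a b) with h0 | h0
        · rw [← h0] at hprodpos; simp at hprodpos
        · exact h0
      have hpbcpos : 0 < pbc b c := by
        rcases eq_or_lt_of_le (hpbcnn b c) with h0 | h0
        · rw [← h0] at hprodpos; simp at hprodpos
        · exact h0
      have hPval : P a b c = pab a b * pbc b c / pb b := by
        field_simp
        linarith [hprod]
      rw [hPval, Real.log_div (by positivity) (ne_of_gt hpbpos),
        Real.log_mul (ne_of_gt hpabpos) (ne_of_gt hpbcpos)]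
      ring
  -- entropy expansions
  have e4 : H μ (fun ω => (A ω, B ω, C ω)) = -∑ a, ∑ b, ∑ c, P a b c * Real.log (P a b c) := by
    unfold H
    rw [Fintype.sum_prod_type]
    congr 1
    exact Finset.sum_congr rfl fun a _ => Fintype.sum_prod_type _
  have eab : H μ (fun ω => (A ω, B ω)) = -∑ a, ∑ b, pab a b * Real.log (pab a b) := by
    unfold H
    rw [Fintype.sum_prod_type]
  have ebc : H μ (fun ω => (B ω, C ω)) = -∑ b, ∑ c, pbc b c * Real.log (pbc b c) := by
    unfold H
    rw [Fintype.sum_prod_type]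
  have eb : H μ B = -∑ b, pb b * Real.log (pb b) := rfl
  -- collapse marginals
  have s1 : ∑ a, ∑ b, ∑ c, P a b c * Real.log (pab a b)
      = ∑ a, ∑ b, pab a b * Real.log (pab a b) :=
    Finset.sum_congr rfl fun a _ => Finset.sum_congr rfl fun b _ => by
      rw [← Finset.sum_mul, ← hmab]
  have s2 : ∑ a, ∑ b, ∑ c, P a b c * Real.log (pbc b c)
      = ∑ b, ∑ c, pbc b c * Real.log (pbc b c) := by
    calc ∑ a, ∑ b, ∑ c, P a b c * Real.log (pbc b c)
        = ∑ b, ∑ a, ∑ c, P a b c * Real.log (pbc b c) := Finset.sum_comm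
      _ = ∑ b, ∑ c, ∑ a, P a b c * Real.log (pbc b c) :=
          Finset.sum_congr rfl fun b _ => Finset.sum_comm
      _ = ∑ b, ∑ c, pbc b c * Real.log (pbc b c) :=
          Finset.sum_congr rfl fun b _ => Finset.sum_congr rfl fun c _ => by
            rw [← Finset.sum_mul, ← hmbc]
  have s3 : ∑ a, ∑ b, ∑ c, P a b c * Real.log (pb b)
      = ∑ b, pb b * Real.log (pb b) := by
    calc ∑ a, ∑ b, ∑ c, P a b c * Real.log (pb b)
        = ∑ b, ∑ a, ∑ c, P a b c * Real.log (pb b) := Finset.sum_comm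
      _ = ∑ b, pb b * Real.log (pb b) := by
          refine Finset.sum_congr rfl fun b _ => ?_
          calc ∑ a, ∑ c, P a b c * Real.log (pb b)
              = ∑ a, (∑ c, P a b c) * Real.log (pb b) :=
                Finset.sum_congr rfl fun a _ => (Finset.sum_mul _ _ _).symm
            _ = (∑ a, ∑ c, P a b c) * Real.log (pb b) := (Finset.sum_mul _ _ _).symm
            _ = pb b * Real.log (pb b) := by rw [← hmb']
  have main : ∑ a, ∑ b, ∑ c, P a b c * Real.log (P a b c)
      = (∑ a, ∑ b, pab a b * Real.log (pab a b))
        + (∑ b, ∑ c, pbc b c * Real.log (pbc b c))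
        - (∑ b, pb b * Real.log (pb b)) := by
    simp_rw [key]
    simp only [Finset.sum_add_distrib, Finset.sum_sub_distrib]
    rw [s1, s2, s3]
  rw [e4, eab, ebc, eb]
  linarith [main]

end FinPMF

namespace FinPMF
variable {Ω : Type} [Fintype Ω] {μ : FinPMF Ω}
variable {α β γ : Type} [Fintype α] [DecidableEq α] [Fintype β] [DecidableEq β]
  [Fintype γ] [DecidableEq γ]

lemma H_eq_of_inj_comp {X : Ω → α} {Y : Ω → β} (e : α → β) (he : Function.Injective e)
    (hXY : ∀ ω, Y ω = e (X ω)) : H μ Y = H μ X := by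
  rw [show Y = fun ω => e (X ω) from funext hXY]
  exact H_comp_inj X he

lemma condH_pair_right_le (A : Ω → α) (B : Ω → β) (C : Ω → γ) :
    condH μ A (fun ω => (B ω, C ω)) ≤ condH μ A B := by
  unfold condH
  have h1 : H μ (fun ω => (A ω, (B ω, C ω)))
      = H μ (fun ω => ((A ω, C ω), B ω)) :=
    H_eq_of_inj_comp (fun p => (p.1.1, (p.2, p.1.2)))
      (fun p q h => by
        simp only [Prod.ext_iff] at h ⊢
        tauto)
      (fun ω => rfl)
  have h2 : H μ (fun ω => (B ω, C ω)) = H μ (fun ω => (C ω, B ω)) :=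
    H_eq_of_inj_comp (fun p => (p.2, p.1))
      (fun p q h => by
        simp only [Prod.ext_iff] at h ⊢
        tauto)
      (fun ω => rfl)
  have := gibbs (μ := μ) A C B
  linarith

lemma condH_eq_of_condIndep {A : Ω → α} {B : Ω → β} {C : Ω → γ}
    (h : CondIndep μ A B C) :
    condH μ A (fun ω => (B ω, C ω)) = condH μ A B := by
  unfold condH
  have := H_triple_of_condIndep h
  linarith

lemma condH_comp_inj {A : Ω → α} {Y : Ω → β} {Y' : Ω → γ} (e : β → γ)
    (he : Function.Injective e) (h : ∀ ω, Y' ω = e (Y ω)) :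
    condH μ A Y' = condH μ A Y := by
  unfold condH
  rw [H_eq_of_inj_comp e he h,
    H_eq_of_inj_comp (X := fun ω => (A ω, Y ω)) (fun p : α × β => (p.1, e p.2))
      (fun p q hh => by
        simp only [Prod.ext_iff] at hh ⊢
        exact ⟨hh.1, he hh.2⟩)
      (fun ω => by rw [h ω])]

end FinPMF

namespace FinPMF

/-- glue a head (coords satisfying `P`) and tail into one function. -/
def glue {ι V : Type} (P : ι → Prop) [DecidablePred P]
    (tu : ({j // P j} → V) × ({j // ¬ P j} → V)) (j : ι) : V :=
  if h : P j then tu.1 ⟨j, h⟩ else tu.2 ⟨j, h⟩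

lemma glue_pos {ι V : Type} (P : ι → Prop) [DecidablePred P]
    (tu : ({j // P j} → V) × ({j // ¬ P j} → V)) {j : ι} (h : P j) :
    glue P tu j = tu.1 ⟨j, h⟩ := dif_pos h

lemma glue_neg {ι V : Type} (P : ι → Prop) [DecidablePred P]
    (tu : ({j // P j} → V) × ({j // ¬ P j} → V)) {j : ι} (h : ¬ P j) :
    glue P tu j = tu.2 ⟨j, h⟩ := dif_neg h

lemma sum_prod_pmf {ι V : Type} [Fintype ι] [DecidableEq ι] [Fintype V] (q : FinPMF V) :
    ∑ u : ι → V, ∏ j, q.p (u j) = 1 := by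
  classical
  have h := Finset.prod_univ_sum (fun _ : ι => (Finset.univ : Finset V)) (fun _ a => q.p a)
  rw [Fintype.piFinset_univ] at h
  rw [← h]
  simp [q.sum_one]

lemma split_indep {ι V : Type} [Fintype ι] [DecidableEq ι] [Fintype V] [DecidableEq V]
    (ν : FinPMF (ι → V)) (q : FinPMF V) (hp : ∀ s, ν.p s = ∏ j, q.p (s j))
    (P : ι → Prop) [DecidablePred P] (t : {j // P j} → V) (u : {j // ¬ P j} → V) :
    dist ν (fun s => ((fun j : {j // P j} => s j.1), (fun j : {j // ¬ P j} => s j.1))) (t, u)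
      = dist ν (fun s => fun j : {j // P j} => s j.1) t
        * dist ν (fun s => fun j : {j // ¬ P j} => s j.1) u := by
  classical
  set Q1 : ({j // P j} → V) → ℝ := fun t' => ∏ j, q.p (t' j) with hQ1def
  set Q2 : ({j // ¬ P j} → V) → ℝ := fun u' => ∏ j, q.p (u' j) with hQ2def
  have hbij : Function.Bijective (glue (V := V) P) := by
    refine Function.bijective_iff_has_inverse.mpr
      ⟨fun s => ((fun j : {j // P j} => s j.1), (fun j : {j // ¬ P j} => s j.1)), ?_, ?_⟩
    · intro tu
      refine Prod.ext_iff.mpr ⟨funext fun j => ?_, funext fun j => ?_⟩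
      · show glue P tu j.1 = tu.1 j
        rw [glue_pos P tu j.2]
      · show glue P tu j.1 = tu.2 j
        rw [glue_neg P tu j.2]
    · intro s
      funext j
      by_cases h : P j
      · rw [glue_pos P _ h]
      · rw [glue_neg P _ h]
  have key : ∀ G : (ι → V) → ℝ, ∑ tu, G (glue P tu) = ∑ s, G s :=
    fun G => Fintype.sum_bijective (glue P) hbij _ G (fun tu => rfl)
  have hHd : ∀ tu : ({j // P j} → V) × ({j // ¬ P j} → V),
      (fun j : {j // P j} => glue P tu j.1) = tu.1 :=
    fun tu => funext fun j => glue_pos P tu j.2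
  have hTl : ∀ tu : ({j // P j} → V) × ({j // ¬ P j} → V),
      (fun j : {j // ¬ P j} => glue P tu j.1) = tu.2 :=
    fun tu => funext fun j => glue_neg P tu j.2
  have hq : ∀ tu : ({j // P j} → V) × ({j // ¬ P j} → V),
      ν.p (glue P tu) = Q1 tu.1 * Q2 tu.2 := by
    intro tu
    rw [hp, ← Finset.prod_filter_mul_prod_filter_not Finset.univ P (fun j => q.p (glue P tu j))]
    congr 1
    · rw [Finset.prod_subtype (p := P) (Finset.univ.filter P) (fun j => by simp)
        (fun j => q.p (glue P tu j))]
      exact Finset.prod_congr rfl fun j _ => by rw [glue_pos P tu j.2]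
    · rw [Finset.prod_subtype (p := fun j => ¬ P j) (Finset.univ.filter fun j => ¬ P j) (fun j => by simp)
        (fun j => q.p (glue P tu j))]
      exact Finset.prod_congr rfl fun j _ => by rw [glue_neg P tu j.2]
  have hSQ1 : ∑ t', Q1 t' = 1 := sum_prod_pmf q
  have hSQ2 : ∑ u', Q2 u' = 1 := sum_prod_pmf q
  have h12 : dist ν (fun s => ((fun j : {j // P j} => s j.1), (fun j : {j // ¬ P j} => s j.1)))
      (t, u) = Q1 t * Q2 u := by
    unfold dist
    rw [← key (fun s => if ((fun j : {j // P j} => s j.1), (fun j : {j // ¬ P j} => s j.1))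
      = (t, u) then ν.p s else 0)]
    calc ∑ tu, (if ((fun j : {j // P j} => glue P tu j.1), (fun j : {j // ¬ P j} => glue P tu j.1))
            = (t, u) then ν.p (glue P tu) else 0)
        = ∑ tu, (if tu = (t, u) then Q1 tu.1 * Q2 tu.2 else 0) := by
          refine Finset.sum_congr rfl fun tu _ => ?_
          rw [hHd tu, hTl tu, hq tu]
      _ = Q1 t * Q2 u := by
          rw [Finset.sum_ite_eq' Finset.univ (t, u) (fun tu => Q1 tu.1 * Q2 tu.2)]
          simp
  have h1 : dist ν (fun s => fun j : {j // P j} => s j.1) t = Q1 t := by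
    unfold dist
    rw [← key (fun s => if (fun j : {j // P j} => s j.1) = t then ν.p s else 0)]
    calc ∑ tu, (if (fun j : {j // P j} => glue P tu j.1) = t then ν.p (glue P tu) else 0)
        = ∑ tu : ({j // P j} → V) × ({j // ¬ P j} → V),
            (if tu.1 = t then Q1 tu.1 * Q2 tu.2 else 0) := by
          refine Finset.sum_congr rfl fun tu _ => ?_
          rw [hHd tu, hq tu]
      _ = ∑ t', ∑ u', (if t' = t then Q1 t' * Q2 u' else 0) := Fintype.sum_prod_type _
      _ = ∑ t', (if t' = t then Q1 t' * (∑ u', Q2 u') else 0) := by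
          refine Finset.sum_congr rfl fun t' _ => ?_
          split
          · rw [Finset.mul_sum]
          · simp
      _ = Q1 t := by
          rw [Finset.sum_ite_eq' Finset.univ t (fun t' => Q1 t' * (∑ u', Q2 u'))]
          simp [hSQ2]
  have h2 : dist ν (fun s => fun j : {j // ¬ P j} => s j.1) u = Q2 u := by
    unfold dist
    rw [← key (fun s => if (fun j : {j // ¬ P j} => s j.1) = u then ν.p s else 0)]
    calc ∑ tu, (if (fun j : {j // ¬ P j} => glue P tu j.1) = u then ν.p (glue P tu) else 0)
        = ∑ tu : ({j // P j} → V) × ({j // ¬ P j} → V),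
            (if tu.2 = u then Q1 tu.1 * Q2 tu.2 else 0) := by
          refine Finset.sum_congr rfl fun tu _ => ?_
          rw [hTl tu, hq tu]
      _ = ∑ t', ∑ u', (if u' = u then Q1 t' * Q2 u' else 0) := Fintype.sum_prod_type _
      _ = ∑ t', Q1 t' * Q2 u := by
          refine Finset.sum_congr rfl fun t' _ => ?_
          rw [Finset.sum_ite_eq' Finset.univ u (fun u' => Q1 t' * Q2 u')]
          simp
      _ = Q2 u := by rw [← Finset.sum_mul, hSQ1, one_mul]
  rw [h12, h1, h2]

end FinPMF

namespace FinPMF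
variable {Ω : Type} [Fintype Ω] {μ : FinPMF Ω}
variable {α β γ δ ε ζ : Type} [Fintype α] [DecidableEq α] [Fintype β] [DecidableEq β]
  [Fintype γ] [DecidableEq γ] [Fintype δ] [DecidableEq δ] [Fintype ε] [DecidableEq ε]
  [Fintype ζ] [DecidableEq ζ]

lemma dist_comp_pair {A' : Ω → α} {B' : Ω → β}
    (hInd : ∀ a b, dist μ (fun ω => (A' ω, B' ω)) (a, b) = dist μ A' a * dist μ B' b)
    (k : α × β → γ) (c : γ) :
    dist μ (fun ω => k (A' ω, B' ω)) c
      = ∑ a, ∑ b, if k (a, b) = c then dist μ A' a * dist μ B' b else 0 := by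
  rw [dist_map (μ := μ) (fun ω => (A' ω, B' ω)) k c, Fintype.sum_prod_type]
  refine Finset.sum_congr rfl fun a _ => Finset.sum_congr rfl fun b _ => ?_
  rw [hInd a b]

lemma indep_comp {A' : Ω → α} {B' : Ω → β}
    (hInd : ∀ a b, dist μ (fun ω => (A' ω, B' ω)) (a, b) = dist μ A' a * dist μ B' b)
    (g1 : α → γ) (g2 : β → δ) (c : γ) (d : δ) :
    dist μ (fun ω => (g1 (A' ω), g2 (B' ω))) (c, d)
      = dist μ (fun ω => g1 (A' ω)) c * dist μ (fun ω => g2 (B' ω)) d := by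
  have e1 : dist μ (fun ω => (g1 (A' ω), g2 (B' ω))) (c, d)
      = ∑ a, ∑ b, if (g1 a, g2 b) = (c, d) then dist μ A' a * dist μ B' b else 0 :=
    dist_comp_pair hInd (fun ab => (g1 ab.1, g2 ab.2)) (c, d)
  rw [e1, dist_map (μ := μ) A' g1 c, dist_map (μ := μ) B' g2 d, Finset.sum_mul_sum]
  refine Finset.sum_congr rfl fun a _ => Finset.sum_congr rfl fun b _ => ?_
  by_cases h1 : g1 a = c <;> by_cases h2 : g2 b = d <;> simp [Prod.ext_iff, h1, h2]

lemma condIndep_of_indep {A' : Ω → α} {B' : Ω → β}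
    (hInd : ∀ a b, dist μ (fun ω => (A' ω, B' ω)) (a, b) = dist μ A' a * dist μ B' b)
    (π₁ : α → γ) (π₂ : α → δ) (ξ : β → ε) (ψ : δ → β → ζ) :
    CondIndep μ (fun ω => ξ (B' ω)) (fun ω => (ψ (π₂ (A' ω)) (B' ω), π₂ (A' ω)))
      (fun ω => π₁ (A' ω)) := by
  intro x b c
  obtain ⟨f, y⟩ := b
  set pA : α → ℝ := fun a => dist μ A' a with hpA
  set pB : β → ℝ := fun b' => dist μ B' b' with hpB
  set al1 : ℝ := ∑ a, if π₂ a = y ∧ π₁ a = c then pA a else 0 with hal1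
  set al2 : ℝ := ∑ a, if π₂ a = y then pA a else 0 with hal2
  set be1 : ℝ := ∑ b', if ξ b' = x ∧ ψ y b' = f then pB b' else 0 with hbe1
  set be2 : ℝ := ∑ b', if ψ y b' = f then pB b' else 0 with hbe2
  have d1 : dist μ (fun ω => (ξ (B' ω), (ψ (π₂ (A' ω)) (B' ω), π₂ (A' ω)), π₁ (A' ω)))
      (x, (f, y), c) = al1 * be1 := by
    have e1 : dist μ (fun ω => (ξ (B' ω), (ψ (π₂ (A' ω)) (B' ω), π₂ (A' ω)), π₁ (A' ω)))
        (x, (f, y), c)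
        = ∑ a, ∑ b', if (ξ b', (ψ (π₂ a) b', π₂ a), π₁ a) = (x, (f, y), c)
            then pA a * pB b' else 0 :=
      dist_comp_pair hInd (fun ab => (ξ ab.2, (ψ (π₂ ab.1) ab.2, π₂ ab.1), π₁ ab.1))
        (x, (f, y), c)
    rw [e1, hal1, hbe1, Finset.sum_mul_sum]
    refine Finset.sum_congr rfl fun a _ => Finset.sum_congr rfl fun b' _ => ?_
    by_cases h1 : π₂ a = y
    · by_cases h2 : π₁ a = c <;> by_cases h3 : ξ b' = x <;> by_cases h4 : ψ y b' = f <;>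
        simp [Prod.ext_iff, h1, h2, h3, h4]
    · simp [Prod.ext_iff, h1]
  have d2 : dist μ (fun ω => (ψ (π₂ (A' ω)) (B' ω), π₂ (A' ω))) (f, y) = al2 * be2 := by
    have e1 : dist μ (fun ω => (ψ (π₂ (A' ω)) (B' ω), π₂ (A' ω))) (f, y)
        = ∑ a, ∑ b', if (ψ (π₂ a) b', π₂ a) = (f, y) then pA a * pB b' else 0 :=
      dist_comp_pair hInd (fun ab => (ψ (π₂ ab.1) ab.2, π₂ ab.1)) (f, y)
    rw [e1, hal2, hbe2, Finset.sum_mul_sum]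
    refine Finset.sum_congr rfl fun a _ => Finset.sum_congr rfl fun b' _ => ?_
    by_cases h1 : π₂ a = y
    · by_cases h4 : ψ y b' = f <;> simp [Prod.ext_iff, h1, h4]
    · simp [Prod.ext_iff, h1]
  have d3 : dist μ (fun ω => (ξ (B' ω), (ψ (π₂ (A' ω)) (B' ω), π₂ (A' ω)))) (x, (f, y))
      = al2 * be1 := by
    have e1 : dist μ (fun ω => (ξ (B' ω), (ψ (π₂ (A' ω)) (B' ω), π₂ (A' ω)))) (x, (f, y))
        = ∑ a, ∑ b', if (ξ b', (ψ (π₂ a) b', π₂ a)) = (x, (f, y)) then pA a * pB b' else 0 :=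
      dist_comp_pair hInd (fun ab => (ξ ab.2, (ψ (π₂ ab.1) ab.2, π₂ ab.1))) (x, (f, y))
    rw [e1, hal2, hbe1, Finset.sum_mul_sum]
    refine Finset.sum_congr rfl fun a _ => Finset.sum_congr rfl fun b' _ => ?_
    by_cases h1 : π₂ a = y
    · by_cases h3 : ξ b' = x <;> by_cases h4 : ψ y b' = f <;>
        simp [Prod.ext_iff, h1, h3, h4]
    · simp [Prod.ext_iff, h1]
  have d4 : dist μ (fun ω => ((ψ (π₂ (A' ω)) (B' ω), π₂ (A' ω)), π₁ (A' ω))) ((f, y), c)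
      = al1 * be2 := by
    have e1 : dist μ (fun ω => ((ψ (π₂ (A' ω)) (B' ω), π₂ (A' ω)), π₁ (A' ω))) ((f, y), c)
        = ∑ a, ∑ b', if ((ψ (π₂ a) b', π₂ a), π₁ a) = ((f, y), c) then pA a * pB b' else 0 :=
      dist_comp_pair hInd (fun ab => ((ψ (π₂ ab.1) ab.2, π₂ ab.1), π₁ ab.1)) ((f, y), c)
    rw [e1, hal1, hbe2, Finset.sum_mul_sum]
    refine Finset.sum_congr rfl fun a _ => Finset.sum_congr rfl fun b' _ => ?_
    by_cases h1 : π₂ a = y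
    · by_cases h2 : π₁ a = c <;> by_cases h4 : ψ y b' = f <;>
        simp [Prod.ext_iff, h1, h2, h4]
    · simp [Prod.ext_iff, h1]
  rw [d1, d2, d3, d4]
  ring

end FinPMF

namespace FinPMF
variable {Ω : Type} [Fintype Ω] {μ : FinPMF Ω}
variable {α β γ : Type} [Fintype α] [DecidableEq α] [Fintype β] [DecidableEq β]
  [Fintype γ] [DecidableEq γ]

lemma condH_push (Z : Ω → α) (A : α → β) (B : α → γ) :
    condH (push μ Z) A B = condH μ (fun ω => A (Z ω)) (fun ω => B (Z ω)) := by
  unfold condH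
  rw [show H (push μ Z) (fun a => (A a, B a)) = H μ (fun ω => (A (Z ω), B (Z ω))) from
      H_push Z _,
    show H (push μ Z) B = H μ (fun ω => B (Z ω)) from H_push Z B]

lemma MI_push (Z : Ω → α) (A : α → β) (B : α → γ) :
    MI (push μ Z) A B = MI μ (fun ω => A (Z ω)) (fun ω => B (Z ω)) := by
  unfold MI
  rw [show H (push μ Z) A = H μ (fun ω => A (Z ω)) from H_push Z A,
    show H (push μ Z) B = H μ (fun ω => B (Z ω)) from H_push Z B,
    show H (push μ Z) (fun a => (A a, B a)) = H μ (fun ω => (A (Z ω), B (Z ω))) from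
      H_push Z _]

/-- X-prefix read off the head of the split. -/
def pXm {𝒳 𝒴 : Type} {n : ℕ} (i : Fin n)
    (t : {j : Fin n // (j : ℕ) < (i : ℕ)} → 𝒳 × 𝒴) : Fin i.val → 𝒳 :=
  fun j => (t ⟨Fin.castLE i.isLt.le j, j.isLt⟩).1

/-- Y-prefix read off the head of the split. -/
def pYm {𝒳 𝒴 : Type} {n : ℕ} (i : Fin n)
    (t : {j : Fin n // (j : ℕ) < (i : ℕ)} → 𝒳 × 𝒴) : Fin i.val → 𝒴 :=
  fun j => (t ⟨Fin.castLE i.isLt.le j, j.isLt⟩).2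

/-- the `i`-th X-coordinate read off the tail of the split. -/
def xim {𝒳 𝒴 : Type} {n : ℕ} (i : Fin n)
    (u : {j : Fin n // ¬ (j : ℕ) < (i : ℕ)} → 𝒳 × 𝒴) : 𝒳 :=
  (u ⟨i, lt_irrefl _⟩).1

/-- reconstruct `F_y` from the Y-prefix and the tail of the split. -/
def psim {𝒳 𝒴 : Type} {n My : ℕ} (fy : (Fin n → 𝒴) → Fin My) (i : Fin n)
    (yp : Fin i.val → 𝒴) (u : {j : Fin n // ¬ (j : ℕ) < (i : ℕ)} → 𝒳 × 𝒴) : Fin My :=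
  fy (fun j => if h : (j : ℕ) < (i : ℕ) then yp ⟨(j : ℕ), h⟩ else (u ⟨j, h⟩).2)

end FinPMF

namespace FinPMF

set_option maxHeartbeats 2000000 in
lemma step_bound {𝒳 𝒴 : Type} [Fintype 𝒳] [DecidableEq 𝒳] [Fintype 𝒴] [DecidableEq 𝒴]
    {n My : ℕ} (ν : FinPMF (Fin n → 𝒳 × 𝒴)) (q : FinPMF (𝒳 × 𝒴))
    (hp : ∀ s, ν.p s = ∏ j, q.p (s j)) (fy : (Fin n → 𝒴) → Fin My) (i : Fin n)
    (h1 : i.val ≤ n) (h2 : i.val + 1 ≤ n) :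
    (H ν (fun s => fun j : Fin (i.val + 1) => (s (Fin.castLE h2 j)).1)
      - H ν (fun s => ((fun j : Fin (i.val + 1) => (s (Fin.castLE h2 j)).1),
          fy (fun j => (s j).2))))
    - (H ν (fun s => fun j : Fin i.val => (s (Fin.castLE h1 j)).1)
      - H ν (fun s => ((fun j : Fin i.val => (s (Fin.castLE h1 j)).1),
          fy (fun j => (s j).2))))
    ≤ MI ν (fun s => (s i).1)
        (fun s => (fy (fun j => (s j).2),
          fun j : Fin i.val => (s (Fin.castLE h1 j)).2)) := by
  classical
  -- snoc decomposition of the (i+1)-prefix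
  have hsnoc : ∀ s : Fin n → 𝒳 × 𝒴, (fun j : Fin (i.val + 1) => (s (Fin.castLE h2 j)).1)
      = Fin.snoc (fun j : Fin i.val => (s (Fin.castLE h1 j)).1) ((s i).1) := by
    intro s
    funext j
    refine Fin.lastCases ?_ ?_ j
    · rw [Fin.snoc_last]
      have : Fin.castLE h2 (Fin.last i.val) = i := Fin.ext rfl
      rw [this]
    · intro j'
      rw [Fin.snoc_castSucc]
      have : Fin.castLE h2 (Fin.castSucc j') = Fin.castLE h1 j' := Fin.ext rfl
      rw [this]
  have hsnocinj : Function.Injective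
      (fun p : (Fin i.val → 𝒳) × 𝒳 => Fin.snoc p.1 p.2 : _ → (Fin (i.val + 1) → 𝒳)) := by
    intro p p' h
    have h' : (Fin.snoc p.1 p.2 : Fin (i.val + 1) → 𝒳) = Fin.snoc p'.1 p'.2 := h
    have hinit := congrArg Fin.init h'
    rw [Fin.init_snoc, Fin.init_snoc] at hinit
    have hlast := congrFun h' (Fin.last i.val)
    rw [Fin.snoc_last, Fin.snoc_last] at hlast
    exact Prod.ext_iff.mpr ⟨hinit, hlast⟩
  have ha : H ν (fun s => fun j : Fin (i.val + 1) => (s (Fin.castLE h2 j)).1)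
      = H ν (fun s => ((fun j : Fin i.val => (s (Fin.castLE h1 j)).1), (s i).1)) :=
    @H_eq_of_inj_comp (Fin n → 𝒳 × 𝒴) _ ν ((Fin i.val → 𝒳) × 𝒳) (Fin (i.val + 1) → 𝒳)
      _ _ _ _
      (fun s => ((fun j : Fin i.val => (s (Fin.castLE h1 j)).1), (s i).1))
      (fun s => fun j : Fin (i.val + 1) => (s (Fin.castLE h2 j)).1)
      (fun p => Fin.snoc p.1 p.2) hsnocinj (fun s => hsnoc s)
  -- independence of head and tail
  have hInd : ∀ (t : {j : Fin n // (j : ℕ) < (i : ℕ)} → 𝒳 × 𝒴)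
      (u : {j : Fin n // ¬ (j : ℕ) < (i : ℕ)} → 𝒳 × 𝒴),
      dist ν (fun s => ((fun j : {j : Fin n // (j : ℕ) < (i : ℕ)} => s j.1),
        (fun j : {j : Fin n // ¬ (j : ℕ) < (i : ℕ)} => s j.1))) (t, u)
      = dist ν (fun s => fun j : {j : Fin n // (j : ℕ) < (i : ℕ)} => s j.1) t
        * dist ν (fun s => fun j : {j : Fin n // ¬ (j : ℕ) < (i : ℕ)} => s j.1) u :=
    fun t u => split_indep ν q hp (fun j => (j : ℕ) < (i : ℕ)) t u
  have haInd : ∀ (c : Fin i.val → 𝒳) (x : 𝒳),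
      dist ν (fun s => ((fun j : Fin i.val => (s (Fin.castLE h1 j)).1), (s i).1)) (c, x)
      = dist ν (fun s => fun j : Fin i.val => (s (Fin.castLE h1 j)).1) c
        * dist ν (fun s => (s i).1) x :=
    fun c x => indep_comp hInd (pXm i) (xim i) c x
  have hpair : H ν (fun s => ((fun j : Fin i.val => (s (Fin.castLE h1 j)).1), (s i).1))
      = H ν (fun s => fun j : Fin i.val => (s (Fin.castLE h1 j)).1)
        + H ν (fun s => (s i).1) :=
    H_pair_of_indep haInd
  have hb : H ν (fun s => ((fun j : Fin (i.val + 1) => (s (Fin.castLE h2 j)).1),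
        fy (fun j => (s j).2)))
      = H ν (fun s => ((s i).1, ((fun j : Fin i.val => (s (Fin.castLE h1 j)).1),
          fy (fun j => (s j).2)))) := by
    refine @H_eq_of_inj_comp (Fin n → 𝒳 × 𝒴) _ ν (𝒳 × ((Fin i.val → 𝒳) × Fin My))
      ((Fin (i.val + 1) → 𝒳) × Fin My) _ _ _ _
      (fun s => ((s i).1, ((fun j : Fin i.val => (s (Fin.castLE h1 j)).1),
        fy (fun j => (s j).2))))
      (fun s => ((fun j : Fin (i.val + 1) => (s (Fin.castLE h2 j)).1),
        fy (fun j => (s j).2)))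
      (fun p => (Fin.snoc p.2.1 p.1, p.2.2)) ?_ (fun s => Prod.ext_iff.mpr ⟨hsnoc s, rfl⟩)
    intro p p' h
    have h' : ((Fin.snoc p.2.1 p.1 : Fin (i.val + 1) → 𝒳), p.2.2)
        = ((Fin.snoc p'.2.1 p'.1 : Fin (i.val + 1) → 𝒳), p'.2.2) := h
    have hfst : (Fin.snoc p.2.1 p.1 : Fin (i.val + 1) → 𝒳) = Fin.snoc p'.2.1 p'.1 :=
      congrArg (fun z : (Fin (i.val + 1) → 𝒳) × Fin My => z.1) h'
    have hsnd : p.2.2 = p'.2.2 :=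
      congrArg (fun z : (Fin (i.val + 1) → 𝒳) × Fin My => z.2) h'
    have hpq : ((p.2.1, p.1) : (Fin i.val → 𝒳) × 𝒳) = (p'.2.1, p'.1) := hsnocinj hfst
    have hx1 : p.1 = p'.1 := congrArg (fun z : (Fin i.val → 𝒳) × 𝒳 => z.2) hpq
    have hx2 : p.2.1 = p'.2.1 := congrArg (fun z : (Fin i.val → 𝒳) × 𝒳 => z.1) hpq
    exact Prod.ext_iff.mpr ⟨hx1, Prod.ext_iff.mpr ⟨hx2, hsnd⟩⟩
  -- conditioning on more reduces conditional entropy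
  have hc : H ν (fun s => ((s i).1, (((fun j : Fin i.val => (s (Fin.castLE h1 j)).1),
          fy (fun j => (s j).2)), (fun j : Fin i.val => (s (Fin.castLE h1 j)).2))))
      - H ν (fun s => (((fun j : Fin i.val => (s (Fin.castLE h1 j)).1),
          fy (fun j => (s j).2)), (fun j : Fin i.val => (s (Fin.castLE h1 j)).2)))
      ≤ H ν (fun s => ((s i).1, ((fun j : Fin i.val => (s (Fin.castLE h1 j)).1),
          fy (fun j => (s j).2))))
      - H ν (fun s => ((fun j : Fin i.val => (s (Fin.castLE h1 j)).1),
          fy (fun j => (s j).2))) :=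
    condH_pair_right_le (μ := ν) (fun s => (s i).1)
      (fun s => ((fun j : Fin i.val => (s (Fin.castLE h1 j)).1), fy (fun j => (s j).2)))
      (fun s => fun j : Fin i.val => (s (Fin.castLE h1 j)).2)
  -- reshuffle the conditioning tuple
  have hd : H ν (fun s => ((s i).1, (((fun j : Fin i.val => (s (Fin.castLE h1 j)).1),
          fy (fun j => (s j).2)), (fun j : Fin i.val => (s (Fin.castLE h1 j)).2))))
      - H ν (fun s => (((fun j : Fin i.val => (s (Fin.castLE h1 j)).1),
          fy (fun j => (s j).2)), (fun j : Fin i.val => (s (Fin.castLE h1 j)).2)))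
      = H ν (fun s => ((s i).1, ((fy (fun j => (s j).2),
          (fun j : Fin i.val => (s (Fin.castLE h1 j)).2)),
          (fun j : Fin i.val => (s (Fin.castLE h1 j)).1))))
      - H ν (fun s => ((fy (fun j => (s j).2),
          (fun j : Fin i.val => (s (Fin.castLE h1 j)).2)),
          (fun j : Fin i.val => (s (Fin.castLE h1 j)).1))) :=
    by
      have hswapinj : Function.Injective
          (fun p : (Fin My × (Fin i.val → 𝒴)) × (Fin i.val → 𝒳) =>
            (((p.2, p.1.1), p.1.2) : ((Fin i.val → 𝒳) × Fin My) × (Fin i.val → 𝒴))) := by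
        intro p p' h
        have h' : (((p.2, p.1.1), p.1.2) : ((Fin i.val → 𝒳) × Fin My) × (Fin i.val → 𝒴))
            = ((p'.2, p'.1.1), p'.1.2) := h
        have e1 : p.2 = p'.2 :=
          congrArg (fun z : ((Fin i.val → 𝒳) × Fin My) × (Fin i.val → 𝒴) => z.1.1) h'
        have e2 : p.1.1 = p'.1.1 :=
          congrArg (fun z : ((Fin i.val → 𝒳) × Fin My) × (Fin i.val → 𝒴) => z.1.2) h'
        have e3 : p.1.2 = p'.1.2 :=
          congrArg (fun z : ((Fin i.val → 𝒳) × Fin My) × (Fin i.val → 𝒴) => z.2) h'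
        exact Prod.ext_iff.mpr ⟨Prod.ext_iff.mpr ⟨e2, e3⟩, e1⟩
      exact (@condH_comp_inj (Fin n → 𝒳 × 𝒴) _ ν 𝒳
        ((Fin My × (Fin i.val → 𝒴)) × (Fin i.val → 𝒳))
        (((Fin i.val → 𝒳) × Fin My) × (Fin i.val → 𝒴)) _ _ _ _ _ _
        (fun s => (s i).1)
        (fun s => ((fy (fun j => (s j).2), (fun j : Fin i.val => (s (Fin.castLE h1 j)).2)),
          (fun j : Fin i.val => (s (Fin.castLE h1 j)).1)))
        (fun s => (((fun j : Fin i.val => (s (Fin.castLE h1 j)).1), fy (fun j => (s j).2)),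
          (fun j : Fin i.val => (s (Fin.castLE h1 j)).2)))
        (fun p => ((p.2, p.1.1), p.1.2)) hswapinj (fun s => rfl))
  -- conditional independence of X_i and the X-prefix given (F_y, Y-prefix)
  have base := condIndep_of_indep hInd (pXm i) (pYm i) (xim i) (psim fy i)
  have base' : CondIndep ν
      (fun s => xim i (fun j : {j : Fin n // ¬ (j : ℕ) < (i : ℕ)} => s j.1))
      (fun s => (psim fy i (pYm i (fun j : {j : Fin n // (j : ℕ) < (i : ℕ)} => s j.1))
          (fun j : {j : Fin n // ¬ (j : ℕ) < (i : ℕ)} => s j.1),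
        pYm i (fun j : {j : Fin n // (j : ℕ) < (i : ℕ)} => s j.1)))
      (fun s => pXm i (fun j : {j : Fin n // (j : ℕ) < (i : ℕ)} => s j.1)) := base
  have hpsieq : (fun s : Fin n → 𝒳 × 𝒴 =>
        (psim fy i (pYm i (fun j : {j : Fin n // (j : ℕ) < (i : ℕ)} => s j.1))
          (fun j : {j : Fin n // ¬ (j : ℕ) < (i : ℕ)} => s j.1),
        pYm i (fun j : {j : Fin n // (j : ℕ) < (i : ℕ)} => s j.1)))
      = (fun s => (fy (fun j => (s j).2),
          fun j : Fin i.val => (s (Fin.castLE h1 j)).2)) := by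
    funext s
    refine Prod.ext_iff.mpr ⟨?_, ?_⟩
    · show psim fy i (pYm i (fun j : {j : Fin n // (j : ℕ) < (i : ℕ)} => s j.1))
          (fun j : {j : Fin n // ¬ (j : ℕ) < (i : ℕ)} => s j.1) = fy (fun j => (s j).2)
      unfold psim
      congr 1
      funext j
      by_cases h : (j : ℕ) < (i : ℕ)
      · rw [dif_pos h]
        show (s (Fin.castLE i.isLt.le ⟨(j : ℕ), h⟩)).2 = (s j).2
        have : Fin.castLE i.isLt.le (⟨(j : ℕ), h⟩ : Fin i.val) = j := Fin.ext rfl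
        rw [this]
      · rw [dif_neg h]
    · rfl
  have hcondI : CondIndep ν (fun s => (s i).1)
      (fun s => (fy (fun j => (s j).2), fun j : Fin i.val => (s (Fin.castLE h1 j)).2))
      (fun s => fun j : Fin i.val => (s (Fin.castLE h1 j)).1) := hpsieq ▸ base'
  have he2 : H ν (fun s => ((s i).1, ((fy (fun j => (s j).2),
          (fun j : Fin i.val => (s (Fin.castLE h1 j)).2)),
          (fun j : Fin i.val => (s (Fin.castLE h1 j)).1))))
      - H ν (fun s => ((fy (fun j => (s j).2),
          (fun j : Fin i.val => (s (Fin.castLE h1 j)).2)),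
          (fun j : Fin i.val => (s (Fin.castLE h1 j)).1)))
      = H ν (fun s => ((s i).1, (fy (fun j => (s j).2),
          (fun j : Fin i.val => (s (Fin.castLE h1 j)).2))))
      - H ν (fun s => (fy (fun j => (s j).2),
          (fun j : Fin i.val => (s (Fin.castLE h1 j)).2))) :=
    condH_eq_of_condIndep hcondI
  show _ ≤ H ν (fun s => (s i).1)
      + H ν (fun s => (fy (fun j => (s j).2),
          (fun j : Fin i.val => (s (Fin.castLE h1 j)).2)))
      - H ν (fun s => ((s i).1, (fy (fun j => (s j).2),
          (fun j : Fin i.val => (s (Fin.castLE h1 j)).2))))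
  linarith [ha, hpair, hb, hc, hd, he2]

end FinPMF

namespace FinPMF

set_option maxHeartbeats 1000000 in
theorem main_nu {𝒳 𝒴 : Type} [Fintype 𝒳] [DecidableEq 𝒳] [Fintype 𝒴] [DecidableEq 𝒴]
    {n Mx My : ℕ} (ν : FinPMF (Fin n → 𝒳 × 𝒴)) (q : FinPMF (𝒳 × 𝒴))
    (hp : ∀ s, ν.p s = ∏ j, q.p (s j))
    (fx : (Fin n → 𝒳) → Fin Mx) (fy : (Fin n → 𝒴) → Fin My) :
    condH ν (fun s => fx (fun j => (s j).1)) (fun s => fy (fun j => (s j).2)) ≥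
      MI ν (fun s => fun j => (s j).1)
        (fun s => (fx (fun j => (s j).1), fy (fun j => (s j).2))) -
      ∑ i : Fin n, MI ν (fun s => (s i).1)
        (fun s => (fy (fun j => (s j).2),
          fun j : Fin i.val => (s (Fin.castLE i.isLt.le j)).2)) := by
  classical
  set F : ℕ → ℝ := fun k =>
    if h : k ≤ n then
      H ν (fun s => fun j : Fin k => (s (Fin.castLE h j)).1)
        - H ν (fun s => ((fun j : Fin k => (s (Fin.castLE h j)).1), fy (fun j => (s j).2)))
    else 0 with hFdef
  have hF0 : F 0 = - H ν (fun s => fy (fun j => (s j).2)) := by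
    simp only [hFdef]
    rw [dif_pos (Nat.zero_le n)]
    have hz : H ν (fun s => fun j : Fin 0 => (s (Fin.castLE (Nat.zero_le n) j)).1) = 0 :=
      H_unique _
    have hz2 : H ν (fun s => ((fun j : Fin 0 => (s (Fin.castLE (Nat.zero_le n) j)).1),
        fy (fun j => (s j).2))) = H ν (fun s => fy (fun j => (s j).2)) :=
      @H_eq_of_inj_comp (Fin n → 𝒳 × 𝒴) _ ν (Fin My) ((Fin 0 → 𝒳) × Fin My) _ _ _ _
        (fun s => fy (fun j => (s j).2))
        (fun s => ((fun j : Fin 0 => (s (Fin.castLE (Nat.zero_le n) j)).1),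
          fy (fun j => (s j).2)))
        (fun m => ((fun j : Fin 0 => j.elim0), m))
        (fun m m' h => congrArg (fun z : (Fin 0 → 𝒳) × Fin My => z.2) h)
        (fun s => Prod.ext_iff.mpr ⟨funext fun j => j.elim0, rfl⟩)
    rw [hz, hz2]
    ring
  have hcastid : ∀ s : Fin n → 𝒳 × 𝒴,
      (fun j : Fin n => (s (Fin.castLE (le_refl n) j)).1) = fun j => (s j).1 := by
    intro s
    funext j
    have : Fin.castLE (le_refl n) j = j := Fin.ext rfl
    rw [this]
  have hFn : F n = H ν (fun s => fun j => (s j).1)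
      - H ν (fun s => ((fun j => (s j).1), fy (fun j => (s j).2))) := by
    simp only [hFdef]
    rw [dif_pos (le_refl n)]
    rw [show H ν (fun s => fun j : Fin n => (s (Fin.castLE (le_refl n) j)).1)
        = H ν (fun s => fun j => (s j).1) from H_congr (fun s => hcastid s)]
    rw [show H ν (fun s => ((fun j : Fin n => (s (Fin.castLE (le_refl n) j)).1),
          fy (fun j => (s j).2)))
        = H ν (fun s => ((fun j => (s j).1), fy (fun j => (s j).2))) from
      H_congr (fun s => by rw [hcastid s])]
  have htel : ∑ i : Fin n, (F (i.val + 1) - F i.val) = F n - F 0 := by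
    rw [Fin.sum_univ_eq_sum_range (fun k => F (k + 1) - F k) n]
    exact Finset.sum_range_sub F n
  have hterm : ∀ i : Fin n, F (i.val + 1) - F i.val
      ≤ MI ν (fun s => (s i).1) (fun s => (fy (fun j => (s j).2),
          fun j : Fin i.val => (s (Fin.castLE i.isLt.le j)).2)) := by
    intro i
    simp only [hFdef]
    rw [dif_pos (show i.val + 1 ≤ n from i.isLt), dif_pos (show i.val ≤ n from i.isLt.le)]
    exact step_bound ν q hp fy i i.isLt.le i.isLt
  have hsum : ∑ i : Fin n, (F (i.val + 1) - F i.val)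
      ≤ ∑ i : Fin n, MI ν (fun s => (s i).1)
        (fun s => (fy (fun j => (s j).2),
          fun j : Fin i.val => (s (Fin.castLE i.isLt.le j)).2)) :=
    Finset.sum_le_sum fun i _ => hterm i
  have hA : H ν (fun s => ((fun j => (s j).1),
        (fx (fun j => (s j).1), fy (fun j => (s j).2))))
      = H ν (fun s => ((fun j => (s j).1), fy (fun j => (s j).2))) :=
    @H_eq_of_inj_comp (Fin n → 𝒳 × 𝒴) _ ν ((Fin n → 𝒳) × Fin My)
      ((Fin n → 𝒳) × (Fin Mx × Fin My)) _ _ _ _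
      (fun s => ((fun j => (s j).1), fy (fun j => (s j).2)))
      (fun s => ((fun j => (s j).1), (fx (fun j => (s j).1), fy (fun j => (s j).2))))
      (fun p => (p.1, (fx p.1, p.2)))
      (fun p p' h => by
        have h1 : p.1 = p'.1 :=
          congrArg (fun z : (Fin n → 𝒳) × (Fin Mx × Fin My) => z.1) h
        have h2 : (fx p.1, p.2) = (fx p'.1, p'.2) :=
          congrArg (fun z : (Fin n → 𝒳) × (Fin Mx × Fin My) => z.2) h
        exact Prod.ext_iff.mpr ⟨h1, congrArg (fun z : Fin Mx × Fin My => z.2) h2⟩)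
      (fun s => rfl)
  show H ν (fun s => (fx (fun j => (s j).1), fy (fun j => (s j).2)))
      - H ν (fun s => fy (fun j => (s j).2))
    ≥ (H ν (fun s => fun j => (s j).1)
        + H ν (fun s => (fx (fun j => (s j).1), fy (fun j => (s j).2)))
        - H ν (fun s => ((fun j => (s j).1),
            (fx (fun j => (s j).1), fy (fun j => (s j).2)))))
      - ∑ i : Fin n, MI ν (fun s => (s i).1)
        (fun s => (fy (fun j => (s j).2),
          fun j : Fin i.val => (s (Fin.castLE i.isLt.le j)).2))
  linarith [htel, hsum, hF0, hFn, hA]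

end FinPMF


namespace FinPMF

/-- Let `(X_1,Y_1), …, (X_n,Y_n)` be i.i.d. pairs of finitely-valued random variables (their
joint distribution is the `n`-fold product of a single-letter pmf `q`), and let
`F_x = f_x(X^n)`, `F_y = f_y(Y^n)`.  Then
`H(F_x | F_y) ≥ I(X^n; F_x, F_y) − Σ_{i=1}^n I(X_i; F_y, Y^{i−1})`. -/
theorem condH_ge_MI_sub_sum {Ω 𝒳 𝒴 : Type} [Fintype Ω] [Fintype 𝒳] [DecidableEq 𝒳]
    [Fintype 𝒴] [DecidableEq 𝒴] {n Mx My : ℕ}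
    (μ : FinPMF Ω) (X : Ω → Fin n → 𝒳) (Y : Ω → Fin n → 𝒴) (q : FinPMF (𝒳 × 𝒴))
    (hiid : ∀ s : Fin n → 𝒳 × 𝒴,
      dist μ (fun ω => fun i => (X ω i, Y ω i)) s = ∏ i, q.p (s i))
    (fx : (Fin n → 𝒳) → Fin Mx) (fy : (Fin n → 𝒴) → Fin My) :
    condH μ (fun ω => fx (X ω)) (fun ω => fy (Y ω)) ≥
      MI μ X (fun ω => (fx (X ω), fy (Y ω))) -
      ∑ i : Fin n, MI μ (fun ω => X ω i)
        (fun ω => (fy (Y ω), fun j : Fin i.val => Y ω (Fin.castLE i.isLt.le j))) := by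
  classical
  set Z : Ω → Fin n → 𝒳 × 𝒴 := fun ω => fun i => (X ω i, Y ω i) with hZ
  have base := main_nu (push μ Z) q (fun s => hiid s) fx fy
  have hL : condH (push μ Z) (fun s => fx (fun j => (s j).1)) (fun s => fy (fun j => (s j).2))
      = condH μ (fun ω => fx (X ω)) (fun ω => fy (Y ω)) :=
    condH_push Z (fun s => fx (fun j => (s j).1)) (fun s => fy (fun j => (s j).2))
  have hM : MI (push μ Z) (fun s => fun j => (s j).1)
        (fun s => (fx (fun j => (s j).1), fy (fun j => (s j).2)))
      = MI μ X (fun ω => (fx (X ω), fy (Y ω))) :=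
    MI_push Z (fun s => fun j => (s j).1)
      (fun s => (fx (fun j => (s j).1), fy (fun j => (s j).2)))
  have hSi : ∀ i : Fin n, MI (push μ Z) (fun s => (s i).1)
        (fun s => (fy (fun j => (s j).2),
          fun j : Fin i.val => (s (Fin.castLE i.isLt.le j)).2))
      = MI μ (fun ω => X ω i)
        (fun ω => (fy (Y ω), fun j : Fin i.val => Y ω (Fin.castLE i.isLt.le j))) :=
    fun i => MI_push Z (fun s => (s i).1)
      (fun s => (fy (fun j => (s j).2),
        fun j : Fin i.val => (s (Fin.castLE i.isLt.le j)).2))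
  have hSum : ∑ i : Fin n, MI μ (fun ω => X ω i)
        (fun ω => (fy (Y ω), fun j : Fin i.val => Y ω (Fin.castLE i.isLt.le j)))
      = ∑ i : Fin n, MI (push μ Z) (fun s => (s i).1)
        (fun s => (fy (fun j => (s j).2),
          fun j : Fin i.val => (s (Fin.castLE i.isLt.le j)).2)) :=
    Finset.sum_congr rfl fun i _ => (hSi i).symm
  linarith [base, hL, hM, hSum]

end FinPMF
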